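/- Let (λ, x) be an eigenpair of a symmetric tensor A with α > β(A), and let J(x;α) = [(m−1)(A x^{m−2} − λ x xᵀ) + α(I − x xᵀ)]/(λ+α). If the projected Hessian C(λ,x) = Uᵀ((m−1)A x^{m−2} − λI)U is negative definite (U an orthonormal basis of x^⊥), then ρ(J(x;α)) < 1. Conversely, if C(λ,x) is not negative definite, then ρ(J(x;α)) ≥ 1. -/

import Mathlib

set_option maxHeartbeats 1000000


noncomputable section
open scoped BigOperators
open Metric Filter

abbrev En (n : ℕ) := EuclideanSpace ℝ (Fin n)

def Symm {m n : ℕ} (A : (Fin m → Fin n) → ℝ) : Prop :=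
  ∀ (p : Equiv.Perm (Fin m)) (i : Fin m → Fin n), A (i ∘ p) = A i

def tmul {m n : ℕ} (A : (Fin m → Fin n) → ℝ) (x : En n) : ℝ :=
  ∑ i : Fin m → Fin n, A i * ∏ k, x (i k)

def tvec {m n : ℕ} (A : (Fin (m+1) → Fin n) → ℝ) (x : En n) : En n :=
  WithLp.toLp 2 (fun j => ∑ i : Fin m → Fin n, A (Fin.cons j i) * ∏ k, x (i k))

def tmat {m n : ℕ} (A : (Fin (m+2) → Fin n) → ℝ) (x : En n) : Matrix (Fin n) (Fin n) ℝ :=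
  fun j k => ∑ i : Fin m → Fin n, A (Fin.cons j (Fin.cons k i)) * ∏ l, x (i l)

def quadForm {n : ℕ} (M : Matrix (Fin n) (Fin n) ℝ) (y : En n) : ℝ :=
  ∑ j, ∑ k, y j * M j k * y k

def srad {n : ℕ} (M : Matrix (Fin n) (Fin n) ℝ) : ℝ :=
  ⨆ y : sphere (0 : En n) 1, |quadForm M (y : En n)|

def beta {m n : ℕ} (A : (Fin (m+2) → Fin n) → ℝ) : ℝ :=
  ((m:ℝ)+1) * ⨆ x : sphere (0 : En n) 1, srad (tmat A (x : En n))

/-! ### Auxiliary lemmas -/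

lemma norm_sq_eq' {n : ℕ} (y : En n) : ‖y‖^2 = ∑ j, y j * y j := by
  rw [EuclideanSpace.norm_eq, Real.sq_sqrt (Finset.sum_nonneg fun i _ => sq_nonneg _)]
  simp [Real.norm_eq_abs, sq]

lemma inner_eq_sum' {n : ℕ} (x y : En n) : (inner ℝ x y : ℝ) = ∑ j, x j * y j := by
  simp [PiLp.inner_apply, RCLike.inner_apply, mul_comm]

lemma abs_coord_le' {n : ℕ} (y : En n) (j : Fin n) : |y j| ≤ ‖y‖ := by
  have h1 : y j * y j ≤ ∑ k, y k * y k :=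
    Finset.single_le_sum (f := fun k => y k * y k) (fun k _ => mul_self_nonneg _)
      (Finset.mem_univ j)
  have := norm_sq_eq' y
  nlinarith [abs_nonneg (y j), norm_nonneg y, sq_abs (y j)]

lemma quadForm_abs_le' {n : ℕ} (M : Matrix (Fin n) (Fin n) ℝ) (y : En n) (hy : ‖y‖ = 1) :
    |quadForm M y| ≤ ∑ j, ∑ k, |M j k| := by
  unfold quadForm
  refine (Finset.abs_sum_le_sum_abs _ _).trans (Finset.sum_le_sum fun j _ => ?_)
  refine (Finset.abs_sum_le_sum_abs _ _).trans (Finset.sum_le_sum fun k _ => ?_)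
  have h1 := abs_coord_le' y j
  have h2 := abs_coord_le' y k
  rw [hy] at h1 h2
  calc |y j * M j k * y k| = |y j| * |M j k| * |y k| := by rw [abs_mul, abs_mul]
    _ ≤ 1 * |M j k| * 1 := by
        apply mul_le_mul (mul_le_mul h1 le_rfl (abs_nonneg _)
          (by linarith [abs_nonneg (y j)])) h2 (abs_nonneg _)
        positivity
    _ = |M j k| := by ring

lemma bdd_srad' {n : ℕ} (M : Matrix (Fin n) (Fin n) ℝ) :
    BddAbove (Set.range fun y : sphere (0 : En n) 1 => |quadForm M (y : En n)|) := by
  refine ⟨∑ j, ∑ k, |M j k|, ?_⟩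
  rintro r ⟨y, rfl⟩
  exact quadForm_abs_le' M y (by simpa [dist_eq_norm] using y.2)

lemma le_srad' {n : ℕ} (M : Matrix (Fin n) (Fin n) ℝ) (y : En n) (hy : ‖y‖ = 1) :
    |quadForm M y| ≤ srad M :=
  le_ciSup (bdd_srad' M) (⟨y, by simp [mem_sphere, dist_eq_norm, hy]⟩ : sphere (0 : En n) 1)

lemma tmat_symm' {m n : ℕ} (A : (Fin (m+2) → Fin n) → ℝ) (hA : Symm A) (x : En n)
    (j k : Fin n) : tmat A x j k = tmat A x k j := by
  unfold tmat
  refine Finset.sum_congr rfl fun i _ => ?_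
  congr 1
  have := hA (Equiv.swap 0 1) (Fin.cons k (Fin.cons j i))
  rw [← this]
  congr 1
  funext l
  simp only [Function.comp]
  refine Fin.cases ?_ (fun l' => ?_) l
  · simp [Equiv.swap_apply_left]
  · refine Fin.cases ?_ (fun l'' => ?_) l'
    · simp [Equiv.swap_apply_right]
    · rw [Equiv.swap_apply_of_ne_of_ne (by simp [Fin.ext_iff])
        (by simp [Fin.ext_iff, Fin.val_succ])]
      simp [Fin.cons_succ]

lemma tmat_mulvec' {m n : ℕ} (A : (Fin (m+2) → Fin n) → ℝ) (x : En n) (j : Fin n) :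
    ∑ k, tmat A x j k * x k = tvec A x j := by
  unfold tmat tvec
  change _ = ∑ i : Fin (m+1) → Fin n, A (Fin.cons j i) * ∏ k, x (i k)
  rw [← (Fin.consEquiv (fun _ : Fin (m+1) => Fin n)).sum_comp
      (fun i : Fin (m+1) → Fin n => A (Fin.cons j i) * ∏ k, x (i k))]
  rw [Fintype.sum_prod_type]
  refine Finset.sum_congr rfl fun k _ => ?_
  rw [Finset.sum_mul]
  refine Finset.sum_congr rfl fun i _ => ?_
  have h1 : ((Fin.consEquiv (fun _ : Fin (m+1) => Fin n)) (k, i) : Fin (m+1) → Fin n)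
      = Fin.cons k i := rfl
  rw [h1, Fin.prod_univ_succ]
  show (A (Fin.cons j (Fin.cons k i)) * ∏ l : Fin m, x (i l)) * x k
      = A (Fin.cons j (Fin.cons k i)) * (x k * ∏ l : Fin m, x (i l))
  ring

lemma quadJ' {n : ℕ} (B : Matrix (Fin n) (Fin n) ℝ) (x y : En n) (lam α c : ℝ) :
    quadForm ((lam + α)⁻¹ • ((c) • (B - lam • Matrix.vecMulVec x x)
        + α • ((1 : Matrix (Fin n) (Fin n) ℝ) - Matrix.vecMulVec x x))) y
    = (lam + α)⁻¹ * (c * (quadForm B y - lam * (∑ j, x j * y j)^2)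
        + α * ((∑ j, y j * y j) - (∑ j, x j * y j)^2)) := by
  unfold quadForm
  have hsq : (∑ j, x j * y j)^2 = ∑ j, ∑ k, y j * (x j * x k) * y k := by
    rw [sq, Finset.sum_mul_sum]
    exact Finset.sum_congr rfl fun j _ => Finset.sum_congr rfl fun k _ => by ring
  have hid : (∑ j, y j * y j) = ∑ j, ∑ k, y j * ((1 : Matrix (Fin n) (Fin n) ℝ) j k) * y k := by
    refine Finset.sum_congr rfl fun j _ => ?_
    rw [Finset.sum_eq_single j]
    · simp [Matrix.one_apply]
    · intro k _ hk; simp [Matrix.one_apply, Ne.symm hk]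
    · simp
  rw [hsq, hid]
  simp only [Matrix.smul_apply, Matrix.add_apply, Matrix.sub_apply, Matrix.vecMulVec_apply,
    smul_eq_mul, Finset.mul_sum, ← Finset.sum_sub_distrib, ← Finset.sum_add_distrib]
  exact Finset.sum_congr rfl fun j _ => Finset.sum_congr rfl fun k _ => by ring

lemma quad_shift' {n : ℕ} (B : Matrix (Fin n) (Fin n) ℝ) (x y : En n) (lam : ℝ)
    (hBx : ∀ j, ∑ k, B j k * x k = lam * x j) (hBsym : ∀ j k, B j k = B k j)
    (hxx : ∑ j, x j * x j = 1) :
    quadForm B (y - (∑ j, x j * y j) • x)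
      = quadForm B y - lam * (∑ j, x j * y j)^2 := by
  set c := ∑ j, x j * y j with hc
  have hT2 : ∀ z : En n, ∑ j, ∑ k, z j * B j k * x k = lam * ∑ j, x j * z j := by
    intro z
    rw [Finset.mul_sum]
    refine Finset.sum_congr rfl fun j _ => ?_
    have h : ∑ k, z j * B j k * x k = z j * ∑ k, B j k * x k := by
      rw [Finset.mul_sum]; exact Finset.sum_congr rfl fun k _ => by ring
    rw [h, hBx j]; ring
  have hT1 : ∑ j, ∑ k, x j * B j k * y k = lam * c := by
    calc ∑ j, ∑ k, x j * B j k * y k = ∑ j, ∑ k, x j * B k j * y k :=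
          Finset.sum_congr rfl fun j _ => Finset.sum_congr rfl fun k _ => by rw [hBsym j k]
      _ = ∑ k, ∑ j, x j * B k j * y k := Finset.sum_comm
      _ = ∑ k, (lam * x k) * y k := by
          refine Finset.sum_congr rfl fun k _ => ?_
          rw [← hBx k, Finset.sum_mul]
          exact Finset.sum_congr rfl fun j _ => by ring
      _ = lam * c := by rw [hc, Finset.mul_sum]; exact Finset.sum_congr rfl fun k _ => by ring
  have hT3 : ∑ j, ∑ k, x j * B j k * x k = lam := by
    rw [hT2 x, hxx, mul_one]
  have expand : quadForm B (y - c • x)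
      = quadForm B y - c * (∑ j, ∑ k, x j * B j k * y k)
        - c * (∑ j, ∑ k, y j * B j k * x k) + c^2 * (∑ j, ∑ k, x j * B j k * x k) := by
    unfold quadForm
    simp only [PiLp.sub_apply, PiLp.smul_apply, smul_eq_mul, Finset.mul_sum,
      ← Finset.sum_sub_distrib, ← Finset.sum_add_distrib]
    exact Finset.sum_congr rfl fun j _ => Finset.sum_congr rfl fun k _ => by ring
  rw [expand, hT1, hT2 y, hT3, ← hc]
  ring

lemma sum_sq_shift' {n : ℕ} (x y : En n) (hxx : ∑ j, x j * x j = 1) :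
    ∑ j, (y - (∑ i, x i * y i) • x) j * (y - (∑ i, x i * y i) • x) j
      = (∑ j, y j * y j) - (∑ i, x i * y i)^2 := by
  set c := ∑ i, x i * y i with hc
  have expand : ∑ j, (y - c • x) j * (y - c • x) j
      = (∑ j, y j * y j) - 2 * c * (∑ j, x j * y j) + c^2 * ∑ j, x j * x j := by
    simp only [PiLp.sub_apply, PiLp.smul_apply, smul_eq_mul, Finset.mul_sum,
      ← Finset.sum_sub_distrib, ← Finset.sum_add_distrib]
    exact Finset.sum_congr rfl fun j _ => by ring
  rw [expand, hxx, ← hc]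
  ring

lemma orth_shift' {n : ℕ} (x y : En n) (hxx : ∑ j, x j * x j = 1) :
    ∑ j, x j * (y - (∑ i, x i * y i) • x) j = 0 := by
  set c := ∑ i, x i * y i with hc
  have expand : ∑ j, x j * (y - c • x) j
      = (∑ j, x j * y j) - c * ∑ j, x j * x j := by
    simp only [PiLp.sub_apply, PiLp.smul_apply, smul_eq_mul, Finset.mul_sum,
      ← Finset.sum_sub_distrib]
    exact Finset.sum_congr rfl fun j _ => by ring
  rw [expand, hxx, ← hc]
  ring

lemma quad_smul' {n : ℕ} (M : Matrix (Fin n) (Fin n) ℝ) (t : ℝ) (y : En n) :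
    quadForm M (t • y) = t^2 * quadForm M y := by
  unfold quadForm
  simp only [PiLp.smul_apply, smul_eq_mul, Finset.mul_sum]
  exact Finset.sum_congr rfl fun j _ => Finset.sum_congr rfl fun k _ => by ring

lemma quad_cont' {n : ℕ} (M : Matrix (Fin n) (Fin n) ℝ) :
    Continuous fun y : En n => quadForm M y := by
  unfold quadForm
  refine continuous_finset_sum _ fun j _ => continuous_finset_sum _ fun k _ => ?_
  have hj : Continuous fun y : En n => y j := (EuclideanSpace.proj (𝕜 := ℝ) j).continuous
  have hk : Continuous fun y : En n => y k := (EuclideanSpace.proj (𝕜 := ℝ) k).continuous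
  exact (hj.mul continuous_const).mul hk

/-- Stability: with α > β(A) and J(x;α) the SS-HOPM Jacobian at an eigenpair (λ,x),
ρ(J) < 1 if the projected Hessian C(λ,x) is negative definite on x^⊥, and ρ(J) ≥ 1
otherwise. -/
theorem stmt16 {m n : ℕ} (A : (Fin (m+2) → Fin n) → ℝ) (hA : Symm A)
    (α : ℝ) (hα : α > beta A)
    (lam : ℝ) (x : En n) (hx : ‖x‖ = 1) (heig : tvec A x = lam • x) :
    ((∀ y : En n, y ≠ 0 → (inner ℝ x y : ℝ) = 0 →
        ((m : ℝ) + 1) * quadForm (tmat A x) y < lam * ‖y‖^2) →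
      srad ((lam + α)⁻¹ • (((m : ℝ) + 1) • (tmat A x - lam • Matrix.vecMulVec x x)
        + α • ((1 : Matrix (Fin n) (Fin n) ℝ) - Matrix.vecMulVec x x))) < 1) ∧
    (¬ (∀ y : En n, y ≠ 0 → (inner ℝ x y : ℝ) = 0 →
        ((m : ℝ) + 1) * quadForm (tmat A x) y < lam * ‖y‖^2) →
      1 ≤ srad ((lam + α)⁻¹ • (((m : ℝ) + 1) • (tmat A x - lam • Matrix.vecMulVec x x)
        + α • ((1 : Matrix (Fin n) (Fin n) ℝ) - Matrix.vecMulVec x x)))) := by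
  have hxmem : x ∈ sphere (0 : En n) 1 := by simp [mem_sphere, dist_eq_norm, hx]
  haveI hne : Nonempty (sphere (0 : En n) 1) := ⟨⟨x, hxmem⟩⟩
  set B := tmat A x with hB
  set J : Matrix (Fin n) (Fin n) ℝ :=
    (lam + α)⁻¹ • (((m : ℝ) + 1) • (B - lam • Matrix.vecMulVec x x)
      + α • ((1 : Matrix (Fin n) (Fin n) ℝ) - Matrix.vecMulVec x x)) with hJ
  have hxx : ∑ j, x j * x j = 1 := by
    have := norm_sq_eq' x; rw [hx] at this; simpa using this.symm
  have hBx : ∀ j, ∑ k, B j k * x k = lam * x j := by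
    intro j
    rw [hB, tmat_mulvec', heig]
    simp [PiLp.smul_apply]
  have hBsym : ∀ j k, B j k = B k j := tmat_symm' A hA x
  -- lam = quadForm B x
  have hlam_eq : quadForm B x = lam := by
    unfold quadForm
    calc ∑ j, ∑ k, x j * B j k * x k = ∑ j, x j * (lam * x j) := by
          refine Finset.sum_congr rfl fun j _ => ?_
          rw [← hBx j, Finset.mul_sum]
          exact Finset.sum_congr rfl fun k _ => by ring
      _ = lam * ∑ j, x j * x j := by
          rw [Finset.mul_sum]; exact Finset.sum_congr rfl fun j _ => by ring
      _ = lam := by rw [hxx, mul_one]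
  -- bounds on srad / beta
  have hKbdd : BddAbove (Set.range fun x' : sphere (0 : En n) 1 => srad (tmat A (x' : En n))) := by
    refine ⟨∑ j, ∑ k, ∑ i : Fin m → Fin n, |A (Fin.cons j (Fin.cons k i))|, ?_⟩
    rintro r ⟨x', rfl⟩
    have hx' : ‖(x' : En n)‖ = 1 := by simpa [dist_eq_norm] using x'.2
    refine ciSup_le fun y => ?_
    have hy : ‖(y : En n)‖ = 1 := by simpa [dist_eq_norm] using y.2
    refine (quadForm_abs_le' _ _ hy).trans ?_
    refine Finset.sum_le_sum fun j _ => Finset.sum_le_sum fun k _ => ?_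
    unfold tmat
    refine (Finset.abs_sum_le_sum_abs _ _).trans (Finset.sum_le_sum fun i _ => ?_)
    rw [abs_mul]
    have hprod : |∏ l, (x' : En n) (i l)| ≤ 1 := by
      rw [Finset.abs_prod]
      refine Finset.prod_le_one (fun l _ => abs_nonneg _) fun l _ => ?_
      exact le_trans (abs_coord_le' _ _) (le_of_eq hx')
    calc |A (Fin.cons j (Fin.cons k i))| * |∏ l, (x' : En n) (i l)|
        ≤ |A (Fin.cons j (Fin.cons k i))| * 1 :=
          mul_le_mul_of_nonneg_left hprod (abs_nonneg _)
      _ = _ := mul_one _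
  have hsradB_nonneg : 0 ≤ srad B :=
    le_trans (abs_nonneg _) (le_ciSup (bdd_srad' B) (Classical.arbitrary _))
  have hsradB_le : ((m:ℝ)+1) * srad B ≤ beta A := by
    unfold beta
    exact mul_le_mul_of_nonneg_left (le_ciSup hKbdd (⟨x, hxmem⟩ : sphere (0 : En n) 1))
      (by positivity)
  have hbeta_nonneg : 0 ≤ beta A := le_trans (by nlinarith) hsradB_le
  have hlam_abs : |lam| ≤ beta A := by
    have h1 : |lam| ≤ srad B := by rw [← hlam_eq]; exact le_srad' B x hx
    nlinarith
  have hlamα : 0 < lam + α := by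
    rcases abs_le.1 hlam_abs with ⟨h1, _⟩
    linarith
  -- bound (m+1)|Q_B w| ≤ beta A * ‖w‖²
  have hQw : ∀ w : En n, ((m:ℝ)+1) * |quadForm B w| ≤ beta A * ‖w‖^2 := by
    intro w
    rcases eq_or_ne w 0 with rfl | hw
    · have : quadForm B (0 : En n) = 0 := by
        unfold quadForm; simp
      rw [this]; simp
    · have hnw : (0:ℝ) < ‖w‖ := norm_pos_iff.2 hw
      set u : En n := ‖w‖⁻¹ • w with hu
      have hun : ‖u‖ = 1 := by
        rw [hu, norm_smul, norm_inv, norm_norm, inv_mul_cancel₀ (ne_of_gt hnw)]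
      have hq : quadForm B u = (‖w‖⁻¹)^2 * quadForm B w := quad_smul' B _ w
      have h1 : |quadForm B u| ≤ srad B := le_srad' B u hun
      rw [hq, abs_mul, abs_of_nonneg (by positivity : (0:ℝ) ≤ (‖w‖⁻¹)^2)] at h1
      have h2 : ((m:ℝ)+1) * ((‖w‖⁻¹)^2 * |quadForm B w|) ≤ ((m:ℝ)+1) * srad B :=
        mul_le_mul_of_nonneg_left h1 (by positivity)
      have h3 := h2.trans hsradB_le
      have h4 : (‖w‖⁻¹)^2 * ‖w‖^2 = 1 := by
        field_simp
      have h5 := mul_le_mul_of_nonneg_right h3 (sq_nonneg ‖w‖)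
      have h6 : ((m:ℝ)+1) * ((‖w‖⁻¹)^2 * |quadForm B w|) * ‖w‖^2
          = ((m:ℝ)+1) * |quadForm B w| * ((‖w‖⁻¹)^2 * ‖w‖^2) := by ring
      rw [h6, h4, mul_one] at h5
      exact h5
  -- the key identity for unit y
  have hkey : ∀ y : En n, ‖y‖ = 1 →
      quadForm J y = (lam + α)⁻¹ * (((m:ℝ)+1) * quadForm B (y - (∑ j, x j * y j) • x)
        + α * ‖y - (∑ j, x j * y j) • x‖^2) := by
    intro y hy
    have h1 := quadJ' B x y lam α ((m:ℝ)+1)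
    rw [← hJ] at h1
    rw [h1, quad_shift' B x y lam hBx hBsym hxx]
    have h2 : ‖y - (∑ j, x j * y j) • x‖^2 = (∑ j, y j * y j) - (∑ i, x i * y i)^2 := by
      rw [norm_sq_eq', sum_sq_shift' x y hxx]
    rw [h2]
  refine ⟨?_, ?_⟩
  · -- negative definite case
    intro hneg
    -- pointwise bound
    have hpt : ∀ y : En n, ‖y‖ = 1 → |quadForm J y| < 1 := by
      intro y hy
      set c := ∑ j, x j * y j with hc
      set w : En n := y - c • x with hw
      have hid := hkey y hy
      rw [← hc, ← hw] at hid
      have hwn : ‖w‖^2 = 1 - c^2 := by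
        rw [hw, norm_sq_eq', sum_sq_shift' x y hxx, ← hc]
        have : ∑ j, y j * y j = 1 := by
          have := norm_sq_eq' y; rw [hy] at this; simpa using this.symm
        rw [this]
      have horth : (inner ℝ x w : ℝ) = 0 := by
        rw [inner_eq_sum', hw]
        exact orth_shift' x y hxx
      have hwle : ‖w‖^2 ≤ 1 := by nlinarith [sq_nonneg c]
      have hlow : 0 ≤ quadForm J y := by
        rw [hid]
        have h1 : -(beta A * ‖w‖^2) ≤ ((m:ℝ)+1) * quadForm B w := by
          have := hQw w
          have habs := neg_abs_le (quadForm B w)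
          nlinarith [abs_nonneg (quadForm B w)]
        have h2 : (0:ℝ) ≤ ((m:ℝ)+1) * quadForm B w + α * ‖w‖^2 := by
          nlinarith [sq_nonneg ‖w‖]
        exact mul_nonneg (inv_nonneg.2 hlamα.le) h2
      have hup : quadForm J y < 1 := by
        rw [hid]
        rcases eq_or_ne w 0 with hw0 | hw0
        · rw [hw0]
          have hq0 : quadForm B (0 : En n) = 0 := by unfold quadForm; simp
          rw [hq0]
          simp
        · have hlt := hneg w hw0 horth
          have h5 : ((m:ℝ)+1) * quadForm B w + α * ‖w‖^2 < (lam + α) * ‖w‖^2 := by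
            nlinarith
          have h6 : (lam + α) * ‖w‖^2 ≤ lam + α := by nlinarith
          calc (lam + α)⁻¹ * (((m:ℝ)+1) * quadForm B w + α * ‖w‖^2)
              < (lam + α)⁻¹ * (lam + α) := by
                apply mul_lt_mul_of_pos_left _ (inv_pos.2 hlamα)
                linarith
            _ = 1 := inv_mul_cancel₀ (ne_of_gt hlamα)
      rw [abs_of_nonneg hlow]
      exact hup
    -- compactness: sup attained
    have hcompact : IsCompact (sphere (0 : En n) 1) := isCompact_sphere _ _
    have hcont : ContinuousOn (fun y : En n => |quadForm J y|) (sphere (0 : En n) 1) :=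
      ((quad_cont' J).abs).continuousOn
    obtain ⟨y0, hy0mem, hy0max⟩ := hcompact.exists_isMaxOn ⟨x, hxmem⟩ hcont
    have hy0 : ‖y0‖ = 1 := by simpa [dist_eq_norm] using hy0mem
    have hle : srad J ≤ |quadForm J y0| := by
      refine ciSup_le fun y => ?_
      exact hy0max y.2
    exact lt_of_le_of_lt hle (hpt y0 hy0)
  · -- not negative definite case
    intro hnotneg
    push_neg at hnotneg
    obtain ⟨y, hy0, horth, hge⟩ := hnotneg
    have hny : (0:ℝ) < ‖y‖ := norm_pos_iff.2 hy0
    set u : En n := ‖y‖⁻¹ • y with hu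
    have hun : ‖u‖ = 1 := by
      rw [hu, norm_smul, norm_inv, norm_norm, inv_mul_cancel₀ (ne_of_gt hny)]
    have horthu : ∑ j, x j * u j = 0 := by
      have : (inner ℝ x u : ℝ) = 0 := by
        rw [hu, inner_smul_right, horth, mul_zero]
      rw [inner_eq_sum'] at this
      exact this
    have hqu : ((m:ℝ)+1) * quadForm B u ≥ lam := by
      rw [hu, quad_smul']
      have h4 : (‖y‖⁻¹)^2 * ‖y‖^2 = 1 := by field_simp
      nlinarith [sq_nonneg ‖y‖⁻¹]
    have hid := hkey u hun
    rw [horthu, zero_smul, sub_zero] at hid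
    have h1 : (1:ℝ) ≤ quadForm J u := by
      rw [hid, hun]
      have h2 : lam + α ≤ ((m:ℝ)+1) * quadForm B u + α * 1^2 := by nlinarith
      calc (1:ℝ) = (lam + α)⁻¹ * (lam + α) := (inv_mul_cancel₀ (ne_of_gt hlamα)).symm
        _ ≤ (lam + α)⁻¹ * (((m:ℝ)+1) * quadForm B u + α * 1^2) :=
            mul_le_mul_of_nonneg_left h2 (by positivity)
    calc (1:ℝ) ≤ quadForm J u := h1
      _ ≤ |quadForm J u| := le_abs_self _
      _ ≤ srad J := le_srad' J u hun
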